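/- Let K be a field of characteristic ≠ 2, B ∈ GL_n(K) symmetric, and g ∈ GL_n(K) an isometry of B, i.e. g B gᵀ = B. Let P be the characteristic polynomial of g and assume P(1)·P(−1) ≠ 0. Then det(B), det(g − g⁻¹), and P(1)·P(−1) all lie in the same square class of K; in particular there exist c, c' ∈ K^× with det(B) = det(g − g⁻¹)·c² = P(1)·P(−1)·(c')². -/

import Mathlib

open Matrix


open Finset Polynomial in
theorem skew_det_sq_aux {K : Type*} [Field K] (h2 : (2 : K) ≠ 0) :
    ∀ (N : ℕ) (ι : Type) [Fintype ι] [DecidableEq ι], Fintype.card ι ≤ N →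
      ∀ A : Matrix ι ι K, Aᵀ = -A → A.det ≠ 0 → ∃ s : K, A.det = s ^ 2 := by
  intro N
  induction N with
  | zero =>
    intro ι _ _ hcard A _ _
    have : IsEmpty ι := Fintype.card_eq_zero_iff.mp (Nat.le_zero.mp hcard)
    exact ⟨1, by simp [Matrix.det_isEmpty]⟩
  | succ N IH =>
    intro ι _ _ hcard A hskew hdet
    by_cases hι : IsEmpty ι
    · exact ⟨1, by simp [Matrix.det_isEmpty]⟩
    rw [not_isEmpty_iff] at hι
    obtain ⟨i₀⟩ := hι
    -- skew facts
    have hA : ∀ i j, A j i = -A i j := by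
      intro i j
      have := congrFun (congrFun hskew i) j
      simpa [Matrix.transpose_apply] using this
    have hdiag : ∀ i, A i i = 0 := by
      intro i
      have h' : A i i = -A i i := hA i i
      have h2' : 2 * A i i = 0 := by linear_combination h'
      rcases mul_eq_zero.mp h2' with h | h
      · exact absurd h h2
      · exact h
    have hrow : ∃ j₀, A i₀ j₀ ≠ 0 := by
      by_contra h; push_neg at h
      exact hdet (Matrix.det_eq_zero_of_row_eq_zero i₀ h)
    obtain ⟨j₀, ha⟩ := hrow
    have hij : i₀ ≠ j₀ := by
      rintro rfl; exact ha (hdiag i₀)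
    set a := A i₀ j₀ with ha_def
    set E : Matrix ι ι K := Matrix.of fun k l =>
      if k = l then 1
      else if k = i₀ ∨ k = j₀ then 0
      else if l = i₀ then -A k j₀ / a
      else if l = j₀ then A k i₀ / a
      else 0 with hE_def
    have hErow_p : ∀ x, (x = i₀ ∨ x = j₀) → ∀ u, E x u = if x = u then 1 else 0 := by
      intro x hx u
      by_cases h : x = u
      · simp [hE_def, h]
      · simp [hE_def, h, hx]
    have hErow_np : ∀ k, ¬ (k = i₀ ∨ k = j₀) → ∀ u,
        E k u = (if k = u then 1 else 0) + (if u = i₀ then -A k j₀ / a else 0)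
          + (if u = j₀ then A k i₀ / a else 0) := by
      intro k hk u
      have hk1 : k ≠ i₀ := fun h => hk (Or.inl h)
      have hk2 : k ≠ j₀ := fun h => hk (Or.inr h)
      by_cases h1 : k = u
      · have e2 : ¬ u = i₀ := fun h => hk1 (h1.trans h)
        have e3 : ¬ u = j₀ := fun h => hk2 (h1.trans h)
        simp [hE_def, h1, e2, e3]
      · by_cases h2 : u = i₀
        · simp [hE_def, h1, h2, hk, hij, hk1, hk2]
        · by_cases h3 : u = j₀
          · simp [hE_def, h1, h2, h3, hk, hk1, hk2, Ne.symm hij]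
          · simp [hE_def, h1, h2, h3, hk, hk1, hk2]
    set B : Matrix ι ι K := E * A * Eᵀ with hB_def
    have hEA_p : ∀ x, (x = i₀ ∨ x = j₀) → ∀ l, (E * A) x l = A x l := by
      intro x hx l
      rw [Matrix.mul_apply]
      have h1 : ∀ u, E x u * A u l = if u = x then A x l else 0 := by
        intro u
        rw [hErow_p x hx u]
        by_cases h : u = x
        · simp [h]
        · simp [h, Ne.symm h]
      rw [Finset.sum_congr rfl (fun u _ => h1 u), Finset.sum_ite_eq' Finset.univ x]
      simp
    have hsum3 : ∀ (f : ι → K) (k), ¬ (k = i₀ ∨ k = j₀) →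
        ∑ l, f l * E k l = f k + f i₀ * (-A k j₀ / a) + f j₀ * (A k i₀ / a) := by
      intro f k hk
      have h1 : ∀ l, f l * E k l
          = (if k = l then f l else 0) + (if l = i₀ then f l * (-A k j₀ / a) else 0)
            + (if l = j₀ then f l * (A k i₀ / a) else 0) := by
        intro l
        rw [hErow_np k hk l]
        split_ifs <;> ring
      rw [Finset.sum_congr rfl (fun l _ => h1 l)]
      rw [Finset.sum_add_distrib, Finset.sum_add_distrib, Finset.sum_ite_eq,
        Finset.sum_ite_eq', Finset.sum_ite_eq']
      simp
    have hB_pp : ∀ x y, (x = i₀ ∨ x = j₀) → (y = i₀ ∨ y = j₀) → B x y = A x y := by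
      intro x y hx hy
      rw [hB_def, Matrix.mul_apply]
      simp only [Matrix.transpose_apply]
      have h1 : ∀ l, (E * A) x l * E y l = if y = l then A x l else 0 := by
        intro l
        rw [hEA_p x hx l, hErow_p y hy l]
        by_cases h : y = l <;> simp [h]
      rw [Finset.sum_congr rfl (fun l _ => h1 l), Finset.sum_ite_eq]
      simp
    have hB_p_np : ∀ x y, (x = i₀ ∨ x = j₀) → ¬ (y = i₀ ∨ y = j₀) →
        B x y = A x y + A x i₀ * (-A y j₀ / a) + A x j₀ * (A y i₀ / a) := by
      intro x y hx hy
      rw [hB_def, Matrix.mul_apply]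
      simp only [Matrix.transpose_apply]
      rw [Finset.sum_congr rfl (fun l _ => by rw [hEA_p x hx l])]
      exact hsum3 (A x) y hy
    have hBi : ∀ k, ¬ (k = i₀ ∨ k = j₀) → B i₀ k = 0 := by
      intro k hk
      rw [hB_p_np i₀ k (Or.inl rfl) hk, hdiag i₀, hA i₀ k, ← ha_def]
      field_simp
      ring
    have hBj : ∀ k, ¬ (k = i₀ ∨ k = j₀) → B j₀ k = 0 := by
      intro k hk
      rw [hB_p_np j₀ k (Or.inr rfl) hk, hdiag j₀, hA i₀ j₀, hA j₀ k, ← ha_def]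
      field_simp
      ring
    have hBskew : Bᵀ = -B := by
      rw [hB_def, Matrix.transpose_mul, Matrix.transpose_mul, Matrix.transpose_transpose,
        hskew]
      simp [Matrix.mul_assoc]
    have hBskew' : ∀ x y, B y x = -B x y := by
      intro x y
      have := congrFun (congrFun hBskew x) y
      simpa [Matrix.transpose_apply] using this
    have hB_np_p : ∀ x k, (x = i₀ ∨ x = j₀) → ¬ (k = i₀ ∨ k = j₀) → B k x = 0 := by
      intro x k hx hk
      rw [hBskew' x k]
      rcases hx with h | h
      · rw [h, hBi k hk]; ring
      · rw [h, hBj k hk]; ring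
    -- block decomposition
    have hblocks : B.submatrix (Equiv.sumCompl fun k => k = i₀ ∨ k = j₀)
          (Equiv.sumCompl fun k => k = i₀ ∨ k = j₀)
        = Matrix.fromBlocks (Matrix.of fun s t : {k // k = i₀ ∨ k = j₀} => B s.1 t.1) 0 0
            (Matrix.of fun s t : {k // ¬ (k = i₀ ∨ k = j₀)} => B s.1 t.1) := by
      ext st uv
      cases st with
      | inl s =>
        cases uv with
        | inl u => simp
        | inr u =>
          simp only [Matrix.submatrix_apply, Equiv.sumCompl_apply_inl,
            Equiv.sumCompl_apply_inr, Matrix.fromBlocks_apply₁₂, Matrix.zero_apply]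
          rcases s.2 with h | h
          · rw [h]; exact hBi u.1 u.2
          · rw [h]; exact hBj u.1 u.2
      | inr s =>
        cases uv with
        | inl u =>
          simp only [Matrix.submatrix_apply, Equiv.sumCompl_apply_inl,
            Equiv.sumCompl_apply_inr, Matrix.fromBlocks_apply₂₁, Matrix.zero_apply]
          exact hB_np_p u.1 s.1 u.2 s.2
        | inr u => simp
    -- determinant of E is 1
    have hEblocks : E.submatrix (Equiv.sumCompl fun k => k = i₀ ∨ k = j₀)
          (Equiv.sumCompl fun k => k = i₀ ∨ k = j₀)
        = Matrix.fromBlocks 1 0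
            (Matrix.of fun s t : _ => E s.1 t.1) 1 := by
      ext st uv
      cases st with
      | inl s =>
        cases uv with
        | inl u =>
          simp only [Matrix.submatrix_apply, Equiv.sumCompl_apply_inl,
            Matrix.fromBlocks_apply₁₁]
          rw [hErow_p s.1 s.2 u.1, Matrix.one_apply]
          by_cases h : s = u
          · simp [h]
          · have hne : (s : ι) ≠ (u : ι) := fun hh => h (Subtype.ext hh)
            simp [h, hne]
        | inr u =>
          simp only [Matrix.submatrix_apply, Equiv.sumCompl_apply_inl,
            Equiv.sumCompl_apply_inr, Matrix.fromBlocks_apply₁₂, Matrix.zero_apply]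
          rw [hErow_p s.1 s.2 u.1]
          have : ¬ (s.1 = u.1) := fun h => u.2 (h ▸ s.2)
          simp [this]
      | inr s =>
        cases uv with
        | inl u =>
          simp only [Matrix.submatrix_apply, Equiv.sumCompl_apply_inl,
            Equiv.sumCompl_apply_inr, Matrix.fromBlocks_apply₂₁, Matrix.of_apply]
        | inr u =>
          simp only [Matrix.submatrix_apply, Equiv.sumCompl_apply_inr,
            Matrix.fromBlocks_apply₂₂]
          rw [hErow_np s.1 s.2 u.1, Matrix.one_apply]
          have h2' : ¬ (u.1 = i₀) := fun h => u.2 (Or.inl h)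
          have h3 : ¬ (u.1 = j₀) := fun h => u.2 (Or.inr h)
          by_cases h : s = u
          · simp [h, h2', h3]
          · have hne : (s : ι) ≠ (u : ι) := fun hh => h (Subtype.ext hh)
            simp [h, h2', h3, hne]
    have hdetE : E.det = 1 := by
      rw [← Matrix.det_submatrix_equiv_self (Equiv.sumCompl fun k => k = i₀ ∨ k = j₀),
        hEblocks, Matrix.det_fromBlocks_zero₁₂]
      simp
    have hdetBA : B.det = A.det := by
      rw [hB_def, Matrix.det_mul, Matrix.det_mul, Matrix.det_transpose, hdetE]
      ring
    -- the 2x2 block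
    have he2lv : ∀ m : Fin 2, (if m = 0 then i₀ else j₀) = i₀ ∨ (if m = 0 then i₀ else j₀) = j₀ := by
      intro m; by_cases h : m = 0 <;> simp [h]
    set e₂ : Fin 2 ≃ {k // k = i₀ ∨ k = j₀} :=
      { toFun := fun m => ⟨if m = 0 then i₀ else j₀, he2lv m⟩
        invFun := fun x => if x.1 = i₀ then 0 else 1
        left_inv := by
          intro m
          fin_cases m <;> simp [hij, Ne.symm hij]
        right_inv := by
          rintro ⟨k, hk | hk⟩ <;> subst hk <;> simp [hij, Ne.symm hij] } with he2_def
    have hdetX : (Matrix.of fun s t : {k // k = i₀ ∨ k = j₀} => B s.1 t.1).det = a ^ 2 := by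
      rw [← Matrix.det_submatrix_equiv_self e₂, Matrix.det_fin_two]
      have h00 : ((e₂ 0 : {k // k = i₀ ∨ k = j₀}) : ι) = i₀ := by simp [he2_def]
      have h11 : ((e₂ 1 : {k // k = i₀ ∨ k = j₀}) : ι) = j₀ := by simp [he2_def]
      simp only [Matrix.submatrix_apply, Matrix.of_apply, h00, h11]
      rw [hB_pp i₀ i₀ (Or.inl rfl) (Or.inl rfl), hB_pp j₀ j₀ (Or.inr rfl) (Or.inr rfl),
        hB_pp i₀ j₀ (Or.inl rfl) (Or.inr rfl), hB_pp j₀ i₀ (Or.inr rfl) (Or.inl rfl),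
        hdiag i₀, hdiag j₀, hA i₀ j₀, ← ha_def]
      ring
    -- assemble
    have hdetA : A.det
        = a ^ 2 * (Matrix.of fun s t : {k // ¬ (k = i₀ ∨ k = j₀)} => B s.1 t.1).det := by
      rw [← hdetBA,
        ← Matrix.det_submatrix_equiv_self (Equiv.sumCompl fun k => k = i₀ ∨ k = j₀) B,
        hblocks, Matrix.det_fromBlocks_zero₁₂, hdetX]
    set Y : Matrix {k // ¬ (k = i₀ ∨ k = j₀)} {k // ¬ (k = i₀ ∨ k = j₀)} K :=
      Matrix.of fun s t => B s.1 t.1 with hY_def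
    have hYskew : Yᵀ = -Y := by
      ext s t
      simp only [hY_def, Matrix.transpose_apply, Matrix.of_apply, Matrix.neg_apply]
      exact hBskew' s.1 t.1
    have hYdet : Y.det ≠ 0 := by
      intro h
      have h' := hdetA
      rw [h, mul_zero] at h'
      exact hdet h'
    have hcard2 : Fintype.card {k // k = i₀ ∨ k = j₀} = 2 := by
      rw [← Fintype.card_congr e₂, Fintype.card_fin]
    have hcardY : Fintype.card {k // ¬ (k = i₀ ∨ k = j₀)} ≤ N := by
      have hsplit := Fintype.card_congr (Equiv.sumCompl fun k => k = i₀ ∨ k = j₀)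
      rw [Fintype.card_sum, hcard2] at hsplit
      omega
    obtain ⟨s, hs⟩ := IH {k // ¬ (k = i₀ ∨ k = j₀)} hcardY Y hYskew hYdet
    refine ⟨a * s, ?_⟩
    rw [hdetA, hs]
    ring



theorem charpoly_eval_aux {K : Type*} [CommRing K] {m : Type*} [Fintype m] [DecidableEq m]
    (M : Matrix m m K) (r : K) :
    M.charpoly.eval r = (r • (1 : Matrix m m K) - M).det := by
  rw [Matrix.charpoly, _root_.eval_det, Matrix.matPolyEquiv_charmatrix]
  congr 1
  rw [Polynomial.eval_sub, Polynomial.eval_X, Polynomial.eval_C]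
  congr 1
  rw [Matrix.scalar_apply, Matrix.smul_eq_diagonal_mul, Matrix.mul_one]

/-- Let `K` be a field of characteristic ≠ 2, `B ∈ GL_n(K)` symmetric and
`g ∈ GL_n(K)` an isometry of `B`, i.e. `g B gᵀ = B`, whose characteristic polynomial
`P` satisfies `P(1)·P(-1) ≠ 0`.  Then `det B`, `det (g - g⁻¹)` and `P(1)·P(-1)` all lie
in the same square class of `K`. -/
theorem det_eq_det_g_sub_g_inv_square_class
    {K : Type*} [Field K] (h2 : (2 : K) ≠ 0) {n : ℕ}
    (B : Matrix (Fin n) (Fin n) K) (hBunit : IsUnit B.det) (hBsym : Bᵀ = B)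
    (g : Matrix (Fin n) (Fin n) K) (hgunit : IsUnit g.det)
    (hiso : g * B * gᵀ = B)
    (hP : g.charpoly.eval 1 * g.charpoly.eval (-1) ≠ 0) :
    (∃ c : K, c ≠ 0 ∧ B.det = (g - g⁻¹).det * c ^ 2) ∧
      (∃ c' : K, c' ≠ 0 ∧ B.det = g.charpoly.eval 1 * g.charpoly.eval (-1) * c' ^ 2) := by
  have hdetB : B.det ≠ 0 := by simpa [isUnit_iff_ne_zero] using hBunit
  have hginv : g⁻¹ * g = 1 := Matrix.nonsing_inv_mul g hgunit
  have hBg : B * gᵀ = g⁻¹ * B := by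
    calc B * gᵀ = (g⁻¹ * g) * (B * gᵀ) := by rw [hginv, one_mul]
    _ = g⁻¹ * (g * B * gᵀ) := by simp [Matrix.mul_assoc]
    _ = g⁻¹ * B := by rw [hiso]
  have hP1 : g.charpoly.eval 1 ≠ 0 := left_ne_zero_of_mul hP
  have hPm1 : g.charpoly.eval (-1) ≠ 0 := right_ne_zero_of_mul hP
  have hP1eq : g.charpoly.eval 1 = (1 - g).det := by
    rw [charpoly_eval_aux]; congr 1; rw [one_smul]
  have hPm1eq : g.charpoly.eval (-1) = (-1 : K) ^ n * (1 + g).det := by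
    rw [charpoly_eval_aux]
    have h1 : (-1 : K) • (1 : Matrix (Fin n) (Fin n) K) - g = -(1 + g) := by
      rw [neg_one_smul]; abel
    rw [h1, Matrix.det_neg]
    simp [Fintype.card_fin]
  have hdet1g : (1 + g).det ≠ 0 := by
    intro h; apply hPm1; rw [hPm1eq, h, mul_zero]
  have hkey : g * (B * (1 + gᵀ)) = (1 + g) * B := by
    have h1 : B * (1 + gᵀ) = B + B * gᵀ := by rw [mul_add, mul_one]
    rw [h1, mul_add, ← Matrix.mul_assoc, hiso, add_mul, one_mul, add_comm]
  have hdetg1 : g.det = 1 := by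
    have hd := congrArg Matrix.det hkey
    rw [Matrix.det_mul, Matrix.det_mul, Matrix.det_mul] at hd
    have ht : (1 + gᵀ) = (1 + g)ᵀ := by rw [Matrix.transpose_add, Matrix.transpose_one]
    rw [ht, Matrix.det_transpose] at hd
    have h3 : g.det * (B.det * (1 + g).det) = 1 * (B.det * (1 + g).det) := by
      rw [one_mul]; linear_combination hd
    exact mul_right_cancel₀ (mul_ne_zero hdetB hdet1g) h3
  have hfact : g - g⁻¹ = g⁻¹ * ((g - 1) * (g + 1)) := by
    have h1 : (g - 1) * (g + 1) = g * g - 1 := by noncomm_ring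
    rw [h1, mul_sub, ← Matrix.mul_assoc, hginv, one_mul, mul_one]
  have hdetgg : (g - g⁻¹).det = g.charpoly.eval 1 * g.charpoly.eval (-1) := by
    rw [hfact, Matrix.det_mul, Matrix.det_mul, Matrix.det_nonsing_inv, hdetg1]
    have h1 : (g - 1 : Matrix (Fin n) (Fin n) K) = -(1 - g) := by abel
    have h2' : (g + 1 : Matrix (Fin n) (Fin n) K) = 1 + g := by abel
    rw [h1, Matrix.det_neg, h2', hP1eq, hPm1eq]
    have hnn : ((-1 : K) ^ n) * ((-1 : K) ^ n) = 1 := by rw [← mul_pow]; simp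
    simp only [Fintype.card_fin, inv_one, one_mul, Ring.inverse_one]
    ring
  set M : Matrix (Fin n) (Fin n) K := g * B - B * gᵀ with hM_def
  have hMskew : Mᵀ = -M := by
    rw [hM_def, Matrix.transpose_sub, Matrix.transpose_mul, Matrix.transpose_mul,
      hBsym, Matrix.transpose_transpose]
    abel
  have hMfact : M = (g - g⁻¹) * B := by
    rw [hM_def, sub_mul, hBg]
  have hdetM : M.det = (g - g⁻¹).det * B.det := by rw [hMfact, Matrix.det_mul]
  have hd : (g - g⁻¹).det ≠ 0 := by rw [hdetgg]; exact hP
  have hdetMne : M.det ≠ 0 := by rw [hdetM]; exact mul_ne_zero hd hdetB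
  obtain ⟨s, hs⟩ := skew_det_sq_aux h2 n (Fin n) (le_of_eq (Fintype.card_fin n)) M hMskew hdetMne
  have hsne : s ≠ 0 := by
    intro h; exact hdetMne (by rw [hs, h]; ring)
  have haux : ∀ d : K, d ≠ 0 → d * B.det = s ^ 2 → B.det = d * (s / d) ^ 2 := by
    intro d hd0 h1
    field_simp
    linear_combination h1
  have hmain : B.det = (g - g⁻¹).det * (s / (g - g⁻¹).det) ^ 2 :=
    haux _ hd (by rw [← hdetM, hs])
  refine ⟨⟨s / (g - g⁻¹).det, div_ne_zero hsne hd, hmain⟩,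
    ⟨s / (g - g⁻¹).det, div_ne_zero hsne hd, ?_⟩⟩
  rw [← hdetgg]
  exact hmain
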